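/- arXiv:1404.7821 — 3 statements merged into one kernel-verified Lean document; each statement's English description precedes it below -/
import Mathlib

section
/- Define for a symmetric 2×2 real matrix W and λ ≥ 0 the penalized modified determinant det⁺_λ(W) := max(0,W_{1,1})·max(0,W_{2,2}) − W_{1,2}² − λ[(min(0,W_{1,1}))² + (min(0,W_{2,2}))²]. If f > 0 and det⁺_λ(W) = f, then W is positive definite and det(W) = f. Conversely, if W is positive definite and det(W) = f, then det⁺_λ(W) = f. -/
open scoped Matrix


/-- The penalized modified determinant
`det⁺_λ W = max 0 W₁₁ * max 0 W₂₂ - W₁₂² - λ ((min 0 W₁₁)² + (min 0 W₂₂)²)`. -/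
noncomputable def detPlusLam (lam : ℝ) (W : Matrix (Fin 2) (Fin 2) ℝ) : ℝ :=
  max 0 (W 0 0) * max 0 (W 1 1) - (W 0 1) ^ 2 -
    lam * ((min 0 (W 0 0)) ^ 2 + (min 0 (W 1 1)) ^ 2)

lemma diag_pos_of_posDef {W : Matrix (Fin 2) (Fin 2) ℝ} (h : W.PosDef) (i : Fin 2) :
    0 < W i i := by
  have := (Matrix.posDef_iff_dotProduct_mulVec.mp h).2 (x := Pi.single i 1) (by
    intro hx
    have := congrFun hx i
    simp at this)
  simpa [dotProduct, Matrix.mulVec, Fin.sum_univ_two, Pi.single_apply] using this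

/-- If `f > 0` and `det⁺_λ W = f` then `W` is positive definite with `det W = f`;
conversely if `W` is positive definite and `det W = f` then `det⁺_λ W = f`. -/
theorem detPlusLam_eq_iff (W : Matrix (Fin 2) (Fin 2) ℝ) (hsymm : W.IsSymm)
    (lam f : ℝ) (hlam : 0 ≤ lam) (hf : 0 < f) :
    (detPlusLam lam W = f → W.PosDef ∧ W.det = f) ∧
      (W.PosDef → W.det = f → detPlusLam lam W = f) := by
  have hs : W 1 0 = W 0 1 := by
    have := congrFun (congrFun hsymm 0) 1
    simpa [Matrix.transpose_apply] using this
  have hdet : W.det = W 0 0 * W 1 1 - W 0 1 ^ 2 := by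
    rw [Matrix.det_fin_two, hs]; ring
  constructor
  · intro h
    unfold detPlusLam at h
    have hlampen : 0 ≤ lam * ((min 0 (W 0 0)) ^ 2 + (min 0 (W 1 1)) ^ 2) :=
      mul_nonneg hlam (by positivity)
    have h00 : 0 < W 0 0 := by
      by_contra hle
      push_neg at hle
      rw [max_eq_left hle] at h
      nlinarith [sq_nonneg (W 0 1)]
    have h11 : 0 < W 1 1 := by
      by_contra hle
      push_neg at hle
      rw [max_eq_left hle] at h
      nlinarith [sq_nonneg (W 0 1)]
    rw [max_eq_right h00.le, max_eq_right h11.le,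
        min_eq_left h00.le, min_eq_left h11.le] at h
    have hdf : W.det = f := by rw [hdet]; nlinarith
    refine ⟨Matrix.posDef_iff_dotProduct_mulVec.mpr ⟨?_, ?_⟩, hdf⟩
    · ext i j
      fin_cases i <;> fin_cases j <;> simp [Matrix.conjTranspose, hs]
    · intro x hx
      have hx01 : x 0 ≠ 0 ∨ x 1 ≠ 0 := by
        by_contra hc
        push_neg at hc
        exact hx (funext fun i => by fin_cases i <;> simp [hc.1, hc.2])
      have hq : star x ⬝ᵥ W *ᵥ x =
          W 0 0 * x 0 ^ 2 + 2 * W 0 1 * x 0 * x 1 + W 1 1 * x 1 ^ 2 := by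
        simp [dotProduct, Matrix.mulVec, Fin.sum_univ_two, hs]
        ring
      rw [hq]
      have hd : 0 < W 0 0 * W 1 1 - W 0 1 ^ 2 := by rw [← hdet, hdf]; exact hf
      rcases eq_or_ne (x 1) 0 with h1 | h1
      · have h0 : x 0 ≠ 0 := by
          rcases hx01 with h | h
          · exact h
          · exact absurd h1 h
        rw [h1]
        nlinarith [mul_pos h00 (pow_pos (abs_pos.mpr h0) 2), sq_abs (x 0)]
      · nlinarith [sq_nonneg (W 0 0 * x 0 + W 0 1 * x 1),
          mul_pos hd (pow_pos (abs_pos.mpr h1) 2), sq_abs (x 1)]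
  · intro hpd hdf
    have h00 := diag_pos_of_posDef hpd 0
    have h11 := diag_pos_of_posDef hpd 1
    unfold detPlusLam
    rw [max_eq_right h00.le, max_eq_right h11.le,
        min_eq_left h00.le, min_eq_left h11.le]
    rw [hdet] at hdf
    nlinarith
end

section
/- The function u(x) = (1/2)(max(0, ‖x − x₀‖ − 0.2))² with x₀ = (1/2, 1/2) is C¹ on ℝ² and convex, and at every point x with ‖x − x₀‖ > 0.2 (where u is twice differentiable) it satisfies det(D²u(x)) = 1 − 0.2/‖x − x₀‖. -/
open Filter

/-- The Hessian matrix of `u : ℝ² → ℝ` at `x`. -/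
noncomputable def Hess (u : EuclideanSpace ℝ (Fin 2) → ℝ)
    (x : EuclideanSpace ℝ (Fin 2)) : Matrix (Fin 2) (Fin 2) ℝ :=
  Matrix.of fun i j =>
    fderiv ℝ (fun y => fderiv ℝ u y (EuclideanSpace.single j 1)) x
      (EuclideanSpace.single i 1)


lemma phi_hasDerivAt (t : ℝ) :
    HasDerivAt (fun s : ℝ => (1/2 : ℝ) * max 0 s ^ 2) (max 0 t) t := by
  rcases lt_trichotomy t 0 with ht | rfl | ht
  · have hev : (fun s : ℝ => (1/2 : ℝ) * max 0 s ^ 2) =ᶠ[nhds t] fun _ => 0 := by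
      filter_upwards [eventually_lt_nhds ht] with s hs
      rw [max_eq_left hs.le]; ring
    have := (hasDerivAt_const t (0:ℝ)).congr_of_eventuallyEq hev
    simpa [max_eq_left ht.le] using this
  · rw [hasDerivAt_iff_isLittleO]
    rw [Asymptotics.isLittleO_iff]
    intro ε hε
    filter_upwards [Metric.ball_mem_nhds (0:ℝ) (mul_pos two_pos hε)] with s hs
    simp only [Metric.mem_ball, Real.dist_eq, sub_zero] at hs
    have h1 : max 0 s ^ 2 ≤ s ^ 2 := by
      rcases le_or_gt s 0 with h | h
      · rw [max_eq_left h]; nlinarith [sq_nonneg s]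
      · rw [max_eq_right h.le]
    have habs : |s| ^ 2 = s ^ 2 := sq_abs s
    simp only [max_self, sub_zero, smul_zero, max_eq_left le_rfl, mul_zero,
      Real.norm_eq_abs]
    have h2 : |(1/2 : ℝ) * max 0 s ^ 2 - 1/2 * 0 ^ 2| ≤ (1/2) * s^2 := by
      have he : (1/2 : ℝ) * max 0 s ^ 2 - 1/2 * 0 ^ 2 = 1/2 * max 0 s ^ 2 := by ring
      rw [he, abs_of_nonneg (by positivity)]; nlinarith
    calc |(1/2 : ℝ) * max 0 s ^ 2 - 1/2 * 0 ^ 2| ≤ (1/2) * s^2 := h2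
      _ ≤ ε * |s| := by nlinarith [abs_nonneg s]
  · have hev : (fun s : ℝ => (1/2 : ℝ) * max 0 s ^ 2) =ᶠ[nhds t] fun s => (1/2) * s ^ 2 := by
      filter_upwards [eventually_gt_nhds ht] with s hs
      rw [max_eq_right hs.le]
    have h2 : HasDerivAt (fun s : ℝ => (1/2 : ℝ) * s ^ 2) t t := by
      simpa using ((hasDerivAt_pow 2 t).const_mul (1/2 : ℝ))
    have := h2.congr_of_eventuallyEq hev
    simpa [max_eq_right ht.le] using this

lemma phi_contDiff : ContDiff ℝ 1 (fun s : ℝ => (1/2 : ℝ) * max 0 s ^ 2) := by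
  rw [contDiff_one_iff_deriv]
  constructor
  · exact fun t => (phi_hasDerivAt t).differentiableAt
  · have : deriv (fun s : ℝ => (1/2 : ℝ) * max 0 s ^ 2) = fun t => max 0 t := by
      funext t; exact (phi_hasDerivAt t).deriv
    rw [this]
    exact continuous_const.max continuous_id

noncomputable abbrev E2 : Type := EuclideanSpace ℝ (Fin 2)

lemma hasFDerivAt_norm_sub (x₀ x : E2) (hx : x ≠ x₀) :
    HasFDerivAt (fun y => ‖y - x₀‖) (‖x - x₀‖⁻¹ • innerSL ℝ (x - x₀)) x := by
  have hz : x - x₀ ≠ 0 := sub_ne_zero.2 hx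
  have hr : (0:ℝ) < ‖x - x₀‖ := norm_pos_iff.2 hz
  have h1 : HasFDerivAt (fun y : E2 => ‖y - x₀‖ ^ 2)
      (2 • (innerSL ℝ (x - x₀)).comp (ContinuousLinearMap.id ℝ E2)) x := by
    simpa using ((hasFDerivAt_id x).sub_const x₀).norm_sq
  have hs : (‖x - x₀‖ ^ 2 : ℝ) ≠ 0 := by positivity
  have h2 := (Real.hasDerivAt_sqrt hs).comp_hasFDerivAt x h1
  have hfun : (fun y : E2 => Real.sqrt (‖y - x₀‖ ^ 2)) = fun y => ‖y - x₀‖ := by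
    funext y; exact Real.sqrt_sq (norm_nonneg _)
  simp only [Function.comp_def] at h2
  rw [hfun] at h2
  refine h2.congr_fderiv ?_
  ext w
  rw [Real.sqrt_sq (norm_nonneg _)]
  simp only [ContinuousLinearMap.smul_apply, ContinuousLinearMap.coe_smul', Pi.smul_apply,
    ContinuousLinearMap.comp_apply, ContinuousLinearMap.coe_id', id_eq, two_smul,
    smul_eq_mul, innerSL_apply_apply, ContinuousLinearMap.add_apply]
  field_simp
  ring

lemma u_fderiv (x₀ x : E2) (hx : 0.2 < ‖x - x₀‖) :
    HasFDerivAt (fun y : E2 => (1/2 : ℝ) * max 0 (‖y - x₀‖ - 0.2) ^ 2)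
      ((1 - 0.2 / ‖x - x₀‖) • innerSL ℝ (x - x₀)) x := by
  have hr : (0:ℝ) < ‖x - x₀‖ := lt_trans (by norm_num) hx
  have hxne : x ≠ x₀ := by
    intro h; rw [h, sub_self, norm_zero] at hr; exact lt_irrefl _ hr
  have hn := (hasFDerivAt_norm_sub x₀ x hxne).sub_const (0.2 : ℝ)
  have hψ : HasDerivAt (fun s : ℝ => (1/2 : ℝ) * s ^ 2) (‖x - x₀‖ - 0.2) (‖x - x₀‖ - 0.2) := by
    simpa using ((hasDerivAt_pow 2 (‖x - x₀‖ - 0.2)).const_mul (1/2 : ℝ))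
  have h2 := hψ.comp_hasFDerivAt x hn
  have hev : (fun y : E2 => (1/2 : ℝ) * max 0 (‖y - x₀‖ - 0.2) ^ 2) =ᶠ[nhds x]
      (fun y : E2 => (1/2 : ℝ) * (‖y - x₀‖ - 0.2) ^ 2) := by
    have hop : IsOpen {y : E2 | 0.2 < ‖y - x₀‖} :=
      isOpen_lt continuous_const ((continuous_id.sub continuous_const).norm)
    filter_upwards [hop.mem_nhds hx] with y hy
    rw [max_eq_right (sub_nonneg.2 (le_of_lt hy))]
  have h3 := h2.congr_of_eventuallyEq hev
  refine h3.congr_fderiv ?_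
  rw [smul_smul]
  congr 1
  field_simp

lemma hess_entry (x₀ x : E2) (hx : 0.2 < ‖x - x₀‖) (i j : Fin 2) :
    Hess (fun y => (1/2 : ℝ) * max 0 (‖y - x₀‖ - 0.2) ^ 2) x i j =
      0.2 / ‖x - x₀‖ ^ 3 * ((x - x₀) i * (x - x₀) j)
        + (1 - 0.2 / ‖x - x₀‖) * (if j = i then 1 else 0) := by
  have hr : (0:ℝ) < ‖x - x₀‖ := lt_trans (by norm_num) hx
  have hr0 : ‖x - x₀‖ ≠ 0 := ne_of_gt hr
  have hxne : x ≠ x₀ := fun h => by rw [h, sub_self, norm_zero] at hr; exact lt_irrefl _ hr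
  have hop : IsOpen {y : E2 | 0.2 < ‖y - x₀‖} :=
    isOpen_lt continuous_const ((continuous_id.sub continuous_const).norm)
  have key : (fun y => fderiv ℝ (fun z : E2 => (1/2 : ℝ) * max 0 (‖z - x₀‖ - 0.2) ^ 2) y
        (EuclideanSpace.single j 1))
      =ᶠ[nhds x] fun y => (1 - 0.2 / ‖y - x₀‖) * ((y - x₀) j) := by
    filter_upwards [hop.mem_nhds hx] with y hy
    rw [(u_fderiv x₀ y hy).fderiv]
    simp only [ContinuousLinearMap.smul_apply, innerSL_apply_apply, smul_eq_mul,
      EuclideanSpace.inner_single_right, conj_trivial, one_mul]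
  have hM := (hasDerivAt_inv hr0).comp_hasFDerivAt x (hasFDerivAt_norm_sub x₀ x hxne)
  have hc := (hM.const_mul (0.2 : ℝ)).const_sub 1
  have hl := (EuclideanSpace.proj (𝕜 := ℝ) j).hasFDerivAt.comp x
    ((hasFDerivAt_id x).sub_const x₀)
  have hG := hc.mul hl
  simp only [Function.comp_def, id_eq, Pi.mul_def] at hG
  have keyG : (fun y : E2 => (1 - 0.2 / ‖y - x₀‖) * ((y - x₀) j))
      = (fun y : E2 => (1 - 0.2 * ‖y - x₀‖⁻¹) *
          (EuclideanSpace.proj (𝕜 := ℝ) j) (y - x₀)) := by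
    funext y; simp [div_eq_mul_inv]
  have step : Hess (fun y : E2 => (1/2 : ℝ) * max 0 (‖y - x₀‖ - 0.2) ^ 2) x i j
      = fderiv ℝ (fun y : E2 => (1 - 0.2 / ‖y - x₀‖) * ((y - x₀) j)) x
          (EuclideanSpace.single i 1) := by
    simp only [Hess, Matrix.of_apply]
    rw [key.fderiv_eq]
  rw [step, keyG, hG.fderiv]
  simp only [ContinuousLinearMap.add_apply, ContinuousLinearMap.smul_apply,
    ContinuousLinearMap.comp_apply, ContinuousLinearMap.coe_id', id_eq,
    ContinuousLinearMap.neg_apply, innerSL_apply_apply, smul_eq_mul,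
    EuclideanSpace.inner_single_right, conj_trivial, one_mul, PiLp.proj_apply,
    EuclideanSpace.single_apply, Function.comp_apply]
  field_simp
  ring_nf

/-- The function `u(x) = ½ (max 0 (‖x - x₀‖ - 0.2))²` with `x₀ = (1/2, 1/2)` is `C¹`
and convex on `ℝ²`, and wherever `‖x - x₀‖ > 0.2` it satisfies
`det(D²u(x)) = 1 - 0.2/‖x - x₀‖`. -/
theorem mongeAmpere_example_C1 (x₀ : EuclideanSpace ℝ (Fin 2))
    (hx₀ : x₀ 0 = 1 / 2 ∧ x₀ 1 = 1 / 2) :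
    ContDiff ℝ 1 (fun x : EuclideanSpace ℝ (Fin 2) =>
        (1 / 2 : ℝ) * max 0 (‖x - x₀‖ - 0.2) ^ 2) ∧
      ConvexOn ℝ Set.univ (fun x : EuclideanSpace ℝ (Fin 2) =>
        (1 / 2 : ℝ) * max 0 (‖x - x₀‖ - 0.2) ^ 2) ∧
      ∀ x : EuclideanSpace ℝ (Fin 2), 0.2 < ‖x - x₀‖ →
        (Hess (fun y => (1 / 2 : ℝ) * max 0 (‖y - x₀‖ - 0.2) ^ 2) x).det =
          1 - 0.2 / ‖x - x₀‖ := by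
  refine ⟨?_, ?_, ?_⟩
  · -- C¹
    rw [contDiff_iff_contDiffAt]
    intro x
    by_cases hx : x = x₀
    · have hev : (fun y : E2 => (1 / 2 : ℝ) * max 0 (‖y - x₀‖ - 0.2) ^ 2)
          =ᶠ[nhds x] fun _ => (0 : ℝ) := by
        have hmem : Metric.ball x₀ 0.2 ∈ nhds x :=
          Metric.isOpen_ball.mem_nhds (by rw [Metric.mem_ball, hx, dist_self]; norm_num)
        filter_upwards [hmem] with y hy
        rw [Metric.mem_ball, dist_eq_norm] at hy
        rw [max_eq_left (by linarith)]
        ring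
      exact contDiffAt_const.congr_of_eventuallyEq hev
    · have hinner : ContDiffAt ℝ 1 (fun y : E2 => ‖y - x₀‖ - 0.2) x := by
        have h1 : ContDiffAt ℝ 1 (fun y : E2 => y - x₀) x :=
          contDiffAt_id.sub contDiffAt_const
        exact (h1.norm ℝ (sub_ne_zero.2 hx)).sub contDiffAt_const
      have := phi_contDiff.contDiffAt.comp x hinner
      simpa [Function.comp_def] using this
  · -- convexity
    have h1 : ConvexOn ℝ Set.univ (fun y : E2 => ‖y - x₀‖) := by
      simpa [dist_eq_norm] using convexOn_dist x₀ (convex_univ : Convex ℝ (Set.univ : Set E2))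
    have h2 : ConvexOn ℝ Set.univ (fun y : E2 => ‖y - x₀‖ - 0.2) := by
      refine ⟨convex_univ, fun p hp q hq a b ha hb hab => ?_⟩
      have := h1.2 hp hq ha hb hab
      simp only [smul_eq_mul] at this ⊢
      nlinarith [hab]
    have h3 : ConvexOn ℝ Set.univ (fun y : E2 => max 0 (‖y - x₀‖ - 0.2)) := by
      simpa [Pi.sup_def] using (convexOn_const (0:ℝ) convex_univ).sup h2
    have h4 : ConvexOn ℝ Set.univ (fun y : E2 => max 0 (‖y - x₀‖ - 0.2) ^ 2) := by
      refine ⟨convex_univ, fun p _ q _ a b ha hb hab => ?_⟩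
      have h1 := h3.2 (Set.mem_univ p) (Set.mem_univ q) ha hb hab
      simp only [smul_eq_mul] at h1 ⊢
      have h0p : (0:ℝ) ≤ max 0 (‖p - x₀‖ - 0.2) := le_max_left _ _
      have h0q : (0:ℝ) ≤ max 0 (‖q - x₀‖ - 0.2) := le_max_left _ _
      have h0m : (0:ℝ) ≤ max 0 (‖a • p + b • q - x₀‖ - 0.2) := le_max_left _ _
      nlinarith [sq_nonneg (max 0 (‖p - x₀‖ - 0.2) - max 0 (‖q - x₀‖ - 0.2)),
        mul_nonneg ha hb, mul_nonneg (mul_nonneg ha hb)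
          (mul_nonneg h0p h0q), sq_nonneg (a+b)]
    have h5 := h4.smul (by norm_num : (0:ℝ) ≤ 1/2)
    simpa [smul_eq_mul] using h5
  · -- determinant
    intro x hx
    have hr : (0:ℝ) < ‖x - x₀‖ := lt_trans (by norm_num) hx
    have hr0 : ‖x - x₀‖ ≠ 0 := ne_of_gt hr
    have hz : (x - x₀) 0 ^ 2 + (x - x₀) 1 ^ 2 = ‖x - x₀‖ ^ 2 := by
      rw [EuclideanSpace.norm_eq, Real.sq_sqrt (by positivity)]
      simp [Fin.sum_univ_two, sq_abs, Real.norm_eq_abs]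
    rw [Matrix.det_fin_two]
    rw [hess_entry x₀ x hx 0 0, hess_entry x₀ x hx 1 1,
      hess_entry x₀ x hx 0 1, hess_entry x₀ x hx 1 0]
    simp only [↓reduceIte, mul_one, mul_zero, add_zero,
      if_neg (by decide : ¬(0:Fin 2) = 1), if_neg (by decide : ¬(1:Fin 2) = 0)]
    have hz' : (x 0 - x₀ 0) ^ 2 + (x 1 - x₀ 1) ^ 2 = ‖x - x₀‖ ^ 2 := by
      simpa [PiLp.sub_apply] using hz
    have e : 0.2 / ‖x - x₀‖ ^ 3 * ((x - x₀) 0 ^ 2 + (x - x₀) 1 ^ 2) = 0.2 / ‖x - x₀‖ := by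
      rw [hz, div_mul_eq_mul_div, div_eq_div_iff (pow_ne_zero 3 hr0) hr0]; ring
    linear_combination (1 - 0.2 / ‖x - x₀‖) * e
end

section
/- Marsden-type identity for monomial reproduction by B-splines: for a knot sequence T = {t_i} and B-splines N_{j,n} of order n, the monomial x^m for 0 ≤ m ≤ n−1 satisfies x^m = Σ_j [(−1)^{n−1−m} ψ_{j,n}^{(n−1−m)}(0) / ((n−1)(n−2)···(m+1))] N_{j,n}(x) on the interval [t_n, t_{N+1}], where ψ_{j,n}(y) = ∏_{l=1}^{n−1}(t_{j+l} − y). -/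
/-- B-splines of order `n` over the knot sequence `t`, defined by the
Cox–de Boor recursion. `bspline t n i` is the `i`-th B-spline of order `n`. -/
noncomputable def bspline (t : ℕ → ℝ) : ℕ → ℕ → ℝ → ℝ
  | 0, _, _ => 0
  | 1, i, x => if t i ≤ x ∧ x < t (i + 1) then 1 else 0
  | (m + 2), i, x =>
      ((x - t i) / (t (i + m + 1) - t i)) * bspline t (m + 1) i x +
        ((t (i + m + 2) - x) / (t (i + m + 2) - t (i + 1))) * bspline t (m + 1) (i + 1) x


lemma bspline_eq_zero (t : ℕ → ℝ) (ht : Monotone t) :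
    ∀ (n j : ℕ) (x : ℝ), (x < t j ∨ t (j + n) ≤ x) → bspline t n j x = 0
  | 0, j, x, _ => rfl
  | 1, j, x, h => by
    simp only [bspline, ite_eq_right_iff, and_imp]
    intro h1 h2
    rcases h with h | h
    · exact absurd h1 (not_le.mpr h)
    · exact absurd h (not_le.mpr h2)
  | (m + 2), j, x, h => by
    have h1 : bspline t (m + 1) j x = 0 := by
      apply bspline_eq_zero t ht
      rcases h with h | h
      · exact Or.inl h
      · exact Or.inr (le_trans (ht (by omega)) h)
    have h2 : bspline t (m + 1) (j + 1) x = 0 := by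
      apply bspline_eq_zero t ht
      rcases h with h | h
      · exact Or.inl (lt_of_lt_of_le h (ht (by omega)))
      · exact Or.inr (by rw [show j + 1 + (m + 1) = j + (m + 2) from by omega]; exact h)
    simp [bspline, h1, h2]

lemma sum_bspline_one (t : ℕ → ℝ) (ht : StrictMono t) (N : ℕ) (hN : 1 ≤ N)
    (x : ℝ) (hx1 : t 1 ≤ x) (hx2 : x < t (N + 1)) :
    ∑ j ∈ Finset.Icc 1 N, bspline t 1 j x = 1 := by
  classical
  set S := (Finset.Icc 1 N).filter (fun j => t j ≤ x) with hS
  have h1S : (1 : ℕ) ∈ S := by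
    simp [hS, Finset.mem_filter, Finset.mem_Icc, hN, hx1]
  have hSne : S.Nonempty := ⟨1, h1S⟩
  set j := S.max' hSne with hj
  have hjS : j ∈ S := S.max'_mem hSne
  have hjIcc : j ∈ Finset.Icc 1 N := (Finset.mem_filter.mp hjS).1
  have hjle : t j ≤ x := (Finset.mem_filter.mp hjS).2
  obtain ⟨hj1, hjN⟩ := Finset.mem_Icc.mp hjIcc
  have hxj : x < t (j + 1) := by
    rcases eq_or_lt_of_le hjN with h | h
    · rw [h]; exact hx2
    · by_contra hc
      push_neg at hc
      have : j + 1 ∈ S := by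
        simp only [hS, Finset.mem_filter, Finset.mem_Icc]
        exact ⟨⟨by omega, by omega⟩, hc⟩
      have := S.le_max' _ this
      omega
  rw [Finset.sum_eq_single_of_mem j hjIcc]
  · simp [bspline, hjle, hxj]
  · intro i hi hij
    apply bspline_eq_zero t ht.monotone
    rcases lt_or_gt_of_ne hij with h | h
    · right
      calc t (i + 1) ≤ t j := ht.monotone (by omega)
        _ ≤ x := hjle
    · left
      calc x < t (j + 1) := hxj
        _ ≤ t i := ht.monotone (by omega)

lemma prod_Icc_descFactorial : ∀ (b a : ℕ), ∏ i ∈ Finset.Icc (a + 1) b, i = b.descFactorial (b - a)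
  | 0, a => by simp
  | (b + 1), a => by
    rcases le_or_gt a b with h | h
    · rw [Finset.prod_Icc_succ_top (by omega)]
      have : b + 1 - a = (b - a) + 1 := by omega
      rw [prod_Icc_descFactorial b a, this, Nat.succ_descFactorial_succ, mul_comm]
    · have h1 : Finset.Icc (a + 1) (b + 1) = ∅ := by
        apply Finset.Icc_eq_empty; omega
      have h2 : b + 1 - a = 0 := by omega
      rw [h1, h2]; simp



lemma sum_shift_aux (f : ℕ → ℝ) (a b : ℕ) :
    ∑ l ∈ Finset.Icc a b, f (l + 1) = ∑ l ∈ Finset.Icc (a + 1) (b + 1), f l := by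
  rw [← Finset.map_add_right_Icc a b 1, Finset.sum_map]
  rfl

lemma prod_shift_aux (f : ℕ → ℝ) (a b : ℕ) :
    ∏ l ∈ Finset.Icc a b, f (l + 1) = ∏ l ∈ Finset.Icc (a + 1) (b + 1), f l := by
  rw [← Finset.map_add_right_Icc a b 1, Finset.prod_map]
  rfl

/-- `ψ_{j,m+1}(y) * N_{j,m+1}(x)`. -/
noncomputable def psiB (t : ℕ → ℝ) (m : ℕ) (y x : ℝ) (j : ℕ) : ℝ :=
  (∏ l ∈ Finset.Icc 1 m, (t (j + l) - y)) * bspline t (m + 1) j x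

noncomputable def Gfun (t : ℕ → ℝ) (m : ℕ) (y x : ℝ) (j : ℕ) : ℝ :=
  ((t (j + m + 1) - y) * (x - t j) / (t (j + m + 1) - t j)) * psiB t m y x j

noncomputable def Hfun (t : ℕ → ℝ) (m : ℕ) (y x : ℝ) (j : ℕ) : ℝ :=
  ((t j - y) * (t (j + m + 1) - x) / (t (j + m + 1) - t j)) * psiB t m y x j

lemma bspline_marsden_aux (t : ℕ → ℝ) (ht : StrictMono t) (n : ℕ) (hn : 1 ≤ n) :
    ∀ N, n ≤ N → ∀ y x : ℝ, t n ≤ x → x < t (N + 1) →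
      ∑ j ∈ Finset.Icc 1 N, (∏ l ∈ Finset.Icc 1 (n - 1), (t (j + l) - y)) * bspline t n j x
        = (x - y) ^ (n - 1) := by
  induction n, hn using Nat.le_induction with
  | base =>
    intro N hN y x hx1 hx2
    simpa using sum_bspline_one t ht N hN x hx1 hx2
  | succ n hn IH =>
    intro N hN y x hx1 hx2
    obtain ⟨m, rfl⟩ : ∃ m, n = m + 1 := ⟨n - 1, by omega⟩
    have hx1' : t (m + 2) ≤ x := hx1
    have hB1 : bspline t (m + 1) (N + 1) x = 0 :=
      bspline_eq_zero t ht.monotone _ _ _ (Or.inl hx2)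
    have hB2 : bspline t (m + 1) 1 x = 0 := by
      apply bspline_eq_zero t ht.monotone
      right
      rw [show 1 + (m + 1) = m + 2 from by omega]
      exact hx1'
    have step1 : ∀ j : ℕ,
        (∏ l ∈ Finset.Icc 1 (m + 1), (t (j + l) - y)) * bspline t (m + 2) j x
          = Gfun t m y x j + Hfun t m y x (j + 1) := by
      intro j
      have e1 : (∏ l ∈ Finset.Icc 1 (m + 1), (t (j + l) - y))
          = (∏ l ∈ Finset.Icc 1 m, (t (j + l) - y)) * (t (j + m + 1) - y) :=
        Finset.prod_Icc_succ_top (by omega) _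
      have e2 : (∏ l ∈ Finset.Icc 1 (m + 1), (t (j + l) - y))
          = (t (j + 1) - y) * ∏ l ∈ Finset.Icc 1 m, (t (j + 1 + l) - y) := by
        have e3 : ∏ l ∈ Finset.Icc 1 m, (t (j + 1 + l) - y)
            = ∏ l ∈ Finset.Icc 2 (m + 1), (t (j + l) - y) := by
          rw [← prod_shift_aux (fun l => t (j + l) - y) 1 m]
          apply Finset.prod_congr rfl
          intro l _
          have h : j + 1 + l = j + (l + 1) := by omega
          rw [h]
        rw [e3, Finset.Icc_eq_cons_Ioc (by omega : 1 ≤ m + 1), Finset.prod_cons]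
        congr 1
      have hb : bspline t (m + 2) j x =
          ((x - t j) / (t (j + m + 1) - t j)) * bspline t (m + 1) j x +
            ((t (j + m + 2) - x) / (t (j + m + 2) - t (j + 1))) * bspline t (m + 1) (j + 1) x := by
        simp [bspline]
      rw [hb, mul_add]
      congr 1
      · rw [e1]
        simp only [Gfun, psiB]
        ring
      · rw [e2]
        simp only [Hfun, psiB]
        rw [show j + 1 + m + 1 = j + m + 2 from by omega]
        ring
    calc ∑ j ∈ Finset.Icc 1 N, (∏ l ∈ Finset.Icc 1 (m + 1), (t (j + l) - y)) * bspline t (m + 2) j x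
        = ∑ j ∈ Finset.Icc 1 N, (Gfun t m y x j + Hfun t m y x (j + 1)) :=
          Finset.sum_congr rfl fun j _ => step1 j
      _ = (∑ j ∈ Finset.Icc 1 N, Gfun t m y x j) + ∑ j ∈ Finset.Icc 1 N, Hfun t m y x (j + 1) :=
          Finset.sum_add_distrib
      _ = (∑ j ∈ Finset.Icc 1 (N + 1), Gfun t m y x j) + ∑ j ∈ Finset.Icc 1 (N + 1), Hfun t m y x j := by
          congr 1
          · rw [Finset.sum_Icc_succ_top (by omega : 1 ≤ N + 1)]
            have hG0 : Gfun t m y x (N + 1) = 0 := by simp [Gfun, psiB, hB1]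
            rw [hG0, add_zero]
          · rw [sum_shift_aux (Hfun t m y x) 1 N]
            rw [Finset.Icc_eq_cons_Ioc (by omega : 1 ≤ N + 1), Finset.sum_cons]
            have hH0 : Hfun t m y x 1 = 0 := by simp [Hfun, psiB, hB2]
            rw [hH0, zero_add, ← Finset.Icc_add_one_left_eq_Ioc]
      _ = ∑ j ∈ Finset.Icc 1 (N + 1), (x - y) * psiB t m y x j := by
          rw [← Finset.sum_add_distrib]
          apply Finset.sum_congr rfl
          intro j _
          have hne : t (j + m + 1) - t j ≠ 0 := sub_ne_zero.mpr (ht (by omega)).ne'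
          simp only [Gfun, Hfun]
          field_simp
          ring
      _ = (x - y) * ∑ j ∈ Finset.Icc 1 (N + 1), psiB t m y x j := by rw [← Finset.mul_sum]
      _ = (x - y) * (x - y) ^ m := by
          have IH' := IH (N + 1) (by omega) y x (le_trans (ht (by omega : m + 1 < m + 2)).le hx1')
            (lt_trans hx2 (ht (by omega : N + 1 < N + 2)))
          simp only [Nat.add_sub_cancel] at IH'
          rw [show (∑ j ∈ Finset.Icc 1 (N + 1), psiB t m y x j)
              = ∑ j ∈ Finset.Icc 1 (N + 1),
                  (∏ l ∈ Finset.Icc 1 m, (t (j + l) - y)) * bspline t (m + 1) j x from rfl]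
          rw [IH']
      _ = (x - y) ^ (m + 1) := by ring



lemma iterate_derivative_sum {σ : Type*} (s : Finset σ) (f : σ → Polynomial ℝ) (k : ℕ) :
    Polynomial.derivative^[k] (∑ j ∈ s, f j) = ∑ j ∈ s, Polynomial.derivative^[k] (f j) := by
  induction k with
  | zero => simp
  | succ k ih => simp [Function.iterate_succ_apply', ih, map_sum]

lemma iteratedDeriv_polyeval (k : ℕ) (p : Polynomial ℝ) (x : ℝ) :
    iteratedDeriv k (fun y => p.eval y) x = (Polynomial.derivative^[k] p).eval x := by
  induction k generalizing x with
  | zero => simp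
  | succ k ih =>
    rw [iteratedDeriv_succ]
    have h : iteratedDeriv k (fun y => p.eval y) = fun y => (Polynomial.derivative^[k] p).eval y :=
      funext fun y => ih y
    rw [h, Polynomial.deriv, Function.iterate_succ_apply']

/-- Marsden-type identity: for `0 ≤ m ≤ n - 1` the monomial `x^m` is reproduced on
`[t_n, t_{N+1})` by the B-splines of order `n`, with coefficients given by the
`(n-1-m)`-th derivative at `0` of `ψ_{j,n}(y) = ∏_{l=1}^{n-1} (t_{j+l} - y)` divided by
`(n-1)(n-2)⋯(m+1)`. -/
theorem bspline_marsden_identity (t : ℕ → ℝ) (ht : StrictMono t)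
    (n N : ℕ) (hn : 1 ≤ n) (hN : n ≤ N) (m : ℕ) (hm : m ≤ n - 1)
    (x : ℝ) (hx : x ∈ Set.Ico (t n) (t (N + 1))) :
    x ^ m =
      ∑ j ∈ Finset.Icc 1 N,
        ((-1 : ℝ) ^ (n - 1 - m) *
            iteratedDeriv (n - 1 - m)
              (fun y : ℝ => ∏ l ∈ Finset.Icc 1 (n - 1), (t (j + l) - y)) 0 /
          ∏ k ∈ Finset.Icc (m + 1) (n - 1), (k : ℝ)) * bspline t n j x := by
  classical
  obtain ⟨hx1, hx2⟩ := hx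
  set k := n - 1 - m with hk
  set P : ℕ → Polynomial ℝ :=
    fun j => ∏ l ∈ Finset.Icc 1 (n - 1), (Polynomial.C (t (j + l)) - Polynomial.X) with hP
  -- the Marsden identity, in polynomial form
  have hQ : (∑ j ∈ Finset.Icc 1 N, Polynomial.C (bspline t n j x) * P j)
      = (Polynomial.C x - Polynomial.X) ^ (n - 1) := by
    apply Polynomial.funext
    intro y
    simp only [Polynomial.eval_finset_sum, Polynomial.eval_mul, Polynomial.eval_C,
      Polynomial.eval_pow, Polynomial.eval_sub, Polynomial.eval_X, hP, Polynomial.eval_prod]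
    rw [← bspline_marsden_aux t ht n hn N hN y x hx1 hx2]
    exact Finset.sum_congr rfl fun j _ => mul_comm _ _
  -- differentiate k times and evaluate at 0
  have key : ∑ j ∈ Finset.Icc 1 N, bspline t n j x * (Polynomial.derivative^[k] (P j)).eval 0
      = (-1 : ℝ) ^ (n - 1) * ((n - 1).descFactorial k : ℝ) * (-x) ^ m := by
    have h0 := congrArg (fun p => (Polynomial.derivative^[k] p).eval 0) hQ
    rw [iterate_derivative_sum] at h0
    have hL : ∀ j, Polynomial.derivative^[k] (Polynomial.C (bspline t n j x) * P j)
        = Polynomial.C (bspline t n j x) * Polynomial.derivative^[k] (P j) :=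
      fun j => Polynomial.iterate_derivative_C_mul _ _ _
    simp only [hL, Polynomial.eval_finset_sum, Polynomial.eval_mul, Polynomial.eval_C] at h0
    rw [h0]
    have hCX : (Polynomial.C x - Polynomial.X : Polynomial ℝ)
        = Polynomial.C ((-1 : ℝ)) * (Polynomial.X - Polynomial.C x) := by
      simp [mul_sub]; ring
    rw [hCX, mul_pow, ← Polynomial.C_pow, Polynomial.iterate_derivative_C_mul,
      Polynomial.iterate_derivative_X_sub_pow]
    have hm' : n - 1 - k = m := by omega
    rw [hm']
    simp [Polynomial.eval_smul, nsmul_eq_mul, zero_sub]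
    ring
  -- denominator
  have hDnat : ∏ i ∈ Finset.Icc (m + 1) (n - 1), i = (n - 1).descFactorial k :=
    prod_Icc_descFactorial (n - 1) m
  have hDpos : 0 < (n - 1).descFactorial k := Nat.pos_of_ne_zero fun h0 => by
    have := Nat.descFactorial_eq_zero_iff_lt.mp h0; omega
  have hD0 : (((n - 1).descFactorial k : ℝ)) ≠ 0 := by positivity
  have hprod : (∏ i ∈ Finset.Icc (m + 1) (n - 1), (i : ℝ)) = ((n - 1).descFactorial k : ℝ) := by
    rw [← Nat.cast_prod, hDnat]
  -- identify the iterated derivatives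
  have hedv : ∀ j, iteratedDeriv k (fun y : ℝ => ∏ l ∈ Finset.Icc 1 (n - 1), (t (j + l) - y)) 0
      = (Polynomial.derivative^[k] (P j)).eval 0 := by
    intro j
    rw [← iteratedDeriv_polyeval]
    congr 1
    funext y
    simp [hP, Polynomial.eval_prod]
  -- final computation
  have hsign : (-1 : ℝ) ^ k * ((-1 : ℝ) ^ (n - 1) * (-1 : ℝ) ^ m) = 1 := by
    rw [← pow_add, ← pow_add, show k + (n - 1 + m) = 2 * (n - 1) from by omega, pow_mul]
    norm_num
  symm
  calc ∑ j ∈ Finset.Icc 1 N,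
        ((-1 : ℝ) ^ k *
            iteratedDeriv k (fun y : ℝ => ∏ l ∈ Finset.Icc 1 (n - 1), (t (j + l) - y)) 0 /
          ∏ i ∈ Finset.Icc (m + 1) (n - 1), (i : ℝ)) * bspline t n j x
      = ((-1 : ℝ) ^ k / ((n - 1).descFactorial k : ℝ)) *
          ∑ j ∈ Finset.Icc 1 N, bspline t n j x * (Polynomial.derivative^[k] (P j)).eval 0 := by
        rw [Finset.mul_sum]
        apply Finset.sum_congr rfl
        intro j _
        rw [hedv j, hprod]
        ring
    _ = ((-1 : ℝ) ^ k / ((n - 1).descFactorial k : ℝ)) *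
          ((-1 : ℝ) ^ (n - 1) * ((n - 1).descFactorial k : ℝ) * (-x) ^ m) := by rw [key]
    _ = x ^ m := by
        rw [neg_pow]
        field_simp
        linear_combination (x ^ m) * hsign
end
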